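/- Under hypotheses CLT and LD, one has limsup_{K→∞} limsup_{ε→0⁺} ε² Σ_{n > ⌊K/ε²⌋} m{x : S_nf(x)/n ≥ ε} = 0. -/

import Mathlib

open Real MeasureTheory Filter

/-- The standard normal distribution function. -/
noncomputable def stdNormalCDF (y : ℝ) : ℝ :=
  (Real.sqrt (2 * Real.pi))⁻¹ * ∫ t in Set.Iic y, Real.exp (-t ^ 2 / 2)

/-- The Birkhoff sum `S_n f = f + f∘T + ⋯ + f∘T^{n-1}`. -/
def birkhoffSum' {X : Type*} (T : X → X) (f : X → ℝ) (n : ℕ) (x : X) : ℝ :=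
  ∑ i ∈ Finset.range n, f (T^[i] x)

-- quadratic lower bound for I near 0
lemma quad_lower_aux (δ : ℝ) (hδ : 0 < δ) (I : ℝ → ℝ)
    (hI : ContDiffOn ℝ 2 I (Set.Ioo (-δ) δ)) (hI0 : I 0 = 0) (hI'0 : deriv I 0 = 0)
    (hI''0 : 0 < deriv (deriv I) 0) :
    ∃ c > 0, ∃ η > 0, η ≤ δ ∧ ∀ ε : ℝ, 0 < ε → ε < η → c * ε ^ 2 ≤ I ε := by
  set s := Set.Ioo (-δ) δ with hs_def
  have hs : IsOpen s := isOpen_Ioo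
  have h0s : (0:ℝ) ∈ s := ⟨by linarith, hδ⟩
  have hg : ContDiffOn ℝ 1 (deriv I) s := hI.deriv_of_isOpen hs (by norm_num)
  have hgd : DifferentiableAt ℝ (deriv I) 0 :=
    (hg.differentiableOn (by norm_num)).differentiableAt (hs.mem_nhds h0s)
  have hD : HasDerivAt (deriv I) (deriv (deriv I) 0) 0 := hgd.hasDerivAt
  set L := deriv (deriv I) 0 with hL
  rw [hasDerivAt_iff_tendsto_slope] at hD
  have hD' : Tendsto (slope (deriv I) 0) (nhdsWithin 0 (Set.Ioi 0)) (nhds L) :=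
    hD.mono_left (nhdsWithin_mono _ (fun x hx => ne_of_gt hx))
  have hev : ∀ᶠ ε in nhdsWithin (0:ℝ) (Set.Ioi 0), L/2 < slope (deriv I) 0 ε :=
    hD'.eventually (eventually_gt_nhds (by linarith))
  obtain ⟨η1, hη1, hsub⟩ := (nhdsGT_basis (0:ℝ)).eventually_iff.mp hev
  refine ⟨L/4, by linarith, min η1 δ, lt_min hη1 hδ, min_le_right _ _, ?_⟩
  intro ε hε hεη
  have hεη1 : ε < η1 := lt_of_lt_of_le hεη (min_le_left _ _)
  have hεδ : ε < δ := lt_of_lt_of_le hεη (min_le_right _ _)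
  have hIccs : Set.Icc (0:ℝ) ε ⊆ s := by
    intro t ht
    exact ⟨by linarith [ht.1], by linarith [ht.2]⟩
  have hderiv : ∀ t ∈ Set.uIcc (0:ℝ) ε, HasDerivAt I (deriv I t) t := by
    intro t ht
    rw [Set.uIcc_of_le hε.le] at ht
    exact ((hI.differentiableOn (by norm_num)).differentiableAt
      (hs.mem_nhds (hIccs ht))).hasDerivAt
  have hint : IntervalIntegrable (deriv I) MeasureTheory.volume 0 ε :=
    (hg.continuousOn.mono hIccs).intervalIntegrable_of_Icc hε.le
  have hFTC : ∫ t in (0:ℝ)..ε, deriv I t = I ε - I 0 :=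
    intervalIntegral.integral_eq_sub_of_hasDerivAt hderiv hint
  have hslope : ∀ t ∈ Set.Icc (0:ℝ) ε, L/2 * t ≤ deriv I t := by
    intro t ht
    rcases eq_or_lt_of_le ht.1 with h | h
    · rw [← h]; simp [hI'0]
    · have htη : t ∈ Set.Ioo (0:ℝ) η1 := ⟨h, lt_of_le_of_lt ht.2 hεη1⟩
      have h2 := hsub htη
      have hsl : slope (deriv I) 0 t = deriv I t / t := by
        simp [slope, hI'0]; ring
      rw [hsl, lt_div_iff₀ h] at h2
      exact h2.le
  have hmono : ∫ t in (0:ℝ)..ε, (L/2)*t ≤ ∫ t in (0:ℝ)..ε, deriv I t :=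
    intervalIntegral.integral_mono_on hε.le
      ((continuous_const.mul continuous_id).intervalIntegrable _ _) hint hslope
  have hval : ∫ t in (0:ℝ)..ε, (L/2)*t = L/2 * (ε^2/2) := by
    rw [intervalIntegral.integral_const_mul]
    simp [integral_id]
  rw [hval, hFTC, hI0] at hmono
  linarith

set_option maxHeartbeats 2000000 in
theorem limsup_limsup_tail_zero
    {X : Type*} [MeasurableSpace X] (m : Measure X) [IsProbabilityMeasure m]
    (T : X → X) (hT : MeasurePreserving T m m)
    (f : X → ℝ) (hf : Measurable f) (hmean : ∫ x, f x ∂m = 0)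
    (σ : ℝ) (hσ : 0 < σ)
    -- CLT: S_n f / (σ √n) converges in distribution to the standard normal
    (hCLT : ∀ y : ℝ,
      Tendsto (fun n : ℕ =>
          (m {x | birkhoffSum' T f n x / (σ * Real.sqrt n) ≤ y}).toReal)
        atTop (nhds (stdNormalCDF y)))
    (δ M C : ℝ) (hδ : 0 < δ) (hM : 0 < M) (hC : 0 < C) (I : ℝ → ℝ)
    (hI : ContDiffOn ℝ 2 I (Set.Ioo (-δ) δ))
    (hInonneg : ∀ ε ∈ Set.Ioo (-δ) δ, 0 ≤ I ε)
    (hI0 : I 0 = 0) (hI'0 : deriv I 0 = 0) (hI''0 : 0 < deriv (deriv I) 0)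
    -- LD: effective large deviation upper bounds
    (hLD : ∀ n : ℕ, 1 ≤ n → ∀ ε ∈ Set.Ioo (0 : ℝ) δ, M / n < ε →
      (m {x | ε ≤ birkhoffSum' T f n x / n}).toReal ≤ C * Real.exp (-I ε * n) ∧
      (m {x | birkhoffSum' T f n x / n ≤ -ε}).toReal ≤ C * Real.exp (-I (-ε) * n)) :
    Filter.limsup (fun K : ℝ =>
        Filter.limsup (fun ε : ℝ =>
            ε ^ 2 * ∑' n : ℕ,
              (if Nat.floor (K / ε ^ 2) < n + 1 then
                (m {x | ε ≤ birkhoffSum' T f (n + 1) x / (n + 1)}).toReal else 0))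
          (nhdsWithin 0 (Set.Ioi 0)))
      atTop = 0 := by
  obtain ⟨c, hc, η, hη, hηδ, hquad⟩ := quad_lower_aux δ hδ I hI hI0 hI'0 hI''0
  set u : ℝ → ℝ → ℝ := fun K ε =>
      ε ^ 2 * ∑' n : ℕ,
        (if Nat.floor (K / ε ^ 2) < n + 1 then
          (m {x | ε ≤ birkhoffSum' T f (n + 1) x / (n + 1)}).toReal else 0) with hu_def
  set φ : ℝ → ℝ := fun K => (4 * C / c) * Real.exp (-(c * K) / 2) with hφ_def
  have hunn : ∀ K ε, 0 ≤ u K ε := by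
    intro K ε
    apply mul_nonneg (sq_nonneg ε)
    apply tsum_nonneg
    intro n
    split
    · exact ENNReal.toReal_nonneg
    · exact le_refl 0
  have key : ∀ K : ℝ, 1 ≤ K → ∀ᶠ ε in nhdsWithin (0:ℝ) (Set.Ioi 0), u K ε ≤ φ K := by
    intro K hK
    have hKpos : (0:ℝ) < K := by linarith
    set η2 : ℝ := min η (min (K / M) (min 1 (2 / c))) with hη2_def
    have hη2 : 0 < η2 := by
      apply lt_min hη
      apply lt_min (by positivity)
      exact lt_min one_pos (by positivity)
    rw [(nhdsGT_basis (0:ℝ)).eventually_iff]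
    refine ⟨η2, hη2, ?_⟩
    rintro ε ⟨hεpos, hεη2⟩
    have hεη : ε < η := lt_of_lt_of_le hεη2 (min_le_left _ _)
    have hεKM : ε ≤ K / M := le_of_lt (lt_of_lt_of_le hεη2 ((min_le_right _ _).trans (min_le_left _ _)))
    have hε1 : ε ≤ 1 := le_of_lt (lt_of_lt_of_le hεη2 ((min_le_right _ _).trans ((min_le_right _ _).trans (min_le_left _ _))))
    have hε2c : ε ≤ 2 / c := le_of_lt (lt_of_lt_of_le hεη2 ((min_le_right _ _).trans ((min_le_right _ _).trans (min_le_right _ _))))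
    have hεδ : ε < δ := lt_of_lt_of_le hεη hηδ
    have hε2 : (0:ℝ) < ε ^ 2 := by positivity
    have hMεK : M * ε ≤ K := by
      rw [le_div_iff₀ hM] at hεKM; linarith [hεKM]
    have hcε : c * ε ≤ 2 := by
      have h := mul_le_mul_of_nonneg_left hε2c hc.le
      rwa [mul_div_cancel₀ 2 (ne_of_gt hc)] at h
    have hcε2 : c * ε ^ 2 ≤ 2 := by nlinarith
    have hIε : c * ε ^ 2 ≤ I ε := hquad ε hεpos hεη
    have hIεpos : 0 < I ε := lt_of_lt_of_le (by positivity) hIε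
    set q : ℝ := Real.exp (-(I ε) / 2) with hq_def
    have hq0 : 0 < q := Real.exp_pos _
    have hq1 : q < 1 := by
      rw [hq_def, Real.exp_lt_one_iff]; linarith
    set B : ℝ := C * Real.exp (-(c * K) / 2) with hB_def
    have hB0 : 0 < B := by positivity
    have hterm : ∀ n : ℕ,
        (if Nat.floor (K / ε ^ 2) < n + 1 then
          (m {x | ε ≤ birkhoffSum' T f (n + 1) x / (n + 1)}).toReal else 0)
        ≤ B * q ^ (n + 1) := by
      intro n
      split_ifs with hn
      · have hn' : K / ε ^ 2 < (n:ℝ) + 1 := by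
          have := (Nat.floor_lt (by positivity)).mp hn
          push_cast at this
          exact this
        have hn1pos : (0:ℝ) < (n:ℝ) + 1 := by positivity
        have hKn : K < ((n:ℝ) + 1) * ε ^ 2 := by
          rw [div_lt_iff₀ hε2] at hn'; exact hn'
        have hKε20 : 0 < K / ε ^ 2 := by positivity
        have hMn : M / ((n:ℝ) + 1) < ε := by
          have h1 : M / ((n:ℝ) + 1) < M / (K / ε ^ 2) :=
            div_lt_div_of_pos_left hM hKε20 hn'
          have h2 : M / (K / ε ^ 2) = M * ε ^ 2 / K := by
            field_simp
          have h3 : M * ε ^ 2 / K ≤ ε := by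
            rw [div_le_iff₀ hKpos]; nlinarith
          linarith [h1, h2 ▸ h1]
        have hLD' := (hLD (n + 1) (by omega) ε ⟨hεpos, hεδ⟩ (by push_cast; exact hMn)).1
        push_cast at hLD'
        refine le_trans hLD' ?_
        have hq_pow : q ^ (n + 1) = Real.exp (((n:ℝ) + 1) * (-(I ε) / 2)) := by
          rw [hq_def, ← Real.exp_nat_mul]
          push_cast; ring_nf
        rw [hq_pow, hB_def, mul_assoc, ← Real.exp_add]
        apply mul_le_mul_of_nonneg_left _ hC.le
        apply Real.exp_le_exp.mpr
        have hcK : c * K ≤ I ε * ((n:ℝ) + 1) := by nlinarith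
        nlinarith
      · positivity
    have hsum_g : Summable (fun n : ℕ => B * q ^ (n + 1)) := by
      have h := (summable_geometric_of_lt_one hq0.le hq1).mul_left (B * q)
      refine h.congr (fun n => ?_)
      rw [pow_succ]; ring
    have hsum_f : Summable (fun n : ℕ =>
        (if Nat.floor (K / ε ^ 2) < n + 1 then
          (m {x | ε ≤ birkhoffSum' T f (n + 1) x / (n + 1)}).toReal else 0)) := by
      refine Summable.of_nonneg_of_le (fun n => ?_) hterm hsum_g
      split
      · exact ENNReal.toReal_nonneg
      · exact le_refl 0
    have htsum := Summable.tsum_le_tsum hterm hsum_f hsum_g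
    have hg_val : ∑' n : ℕ, B * q ^ (n + 1) = B * q * (1 - q)⁻¹ := by
      have : (fun n : ℕ => B * q ^ (n + 1)) = (fun n : ℕ => (B * q) * q ^ n) := by
        funext n; rw [pow_succ]; ring
      rw [this, tsum_mul_left, tsum_geometric_of_lt_one hq0.le hq1]
    have h1q : c * ε ^ 2 / 4 ≤ 1 - q := by
      set t : ℝ := c * ε ^ 2 / 2 with ht_def
      have ht0 : 0 < t := by positivity
      have ht1 : t ≤ 1 := by rw [ht_def]; linarith
      have hv0 : (0:ℝ) < (1 + t)⁻¹ := by positivity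
      have hv : (1 + t)⁻¹ * (1 + t) = 1 := inv_mul_cancel₀ (by positivity)
      have hqv : q ≤ (1 + t)⁻¹ := by
        have he1 : t + 1 ≤ Real.exp t := Real.add_one_le_exp t
        have he2 : q ≤ Real.exp (-t) := by
          rw [hq_def]; apply Real.exp_le_exp.mpr; linarith
        have he3 : Real.exp (-t) = (Real.exp t)⁻¹ := Real.exp_neg t
        have he4 : (Real.exp t)⁻¹ ≤ (1 + t)⁻¹ := by
          apply inv_anti₀ (by positivity) (by linarith)
        rw [he3] at he2; linarith
      nlinarith [mul_nonneg hv0.le (sub_nonneg.mpr ht1)]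
    have h1q0 : 0 < 1 - q := lt_of_lt_of_le (by positivity) h1q
    have hεq : ε ^ 2 * (1 - q)⁻¹ ≤ 4 / c := by
      have h1 : (1 - q)⁻¹ ≤ (c * ε ^ 2 / 4)⁻¹ :=
        inv_anti₀ (by positivity) h1q
      have h2 : ε ^ 2 * (1 - q)⁻¹ ≤ ε ^ 2 * (c * ε ^ 2 / 4)⁻¹ := by
        apply mul_le_mul_of_nonneg_left h1 (sq_nonneg ε)
      have h3 : ε ^ 2 * (c * ε ^ 2 / 4)⁻¹ = 4 / c := by
        field_simp
      linarith
    calc u K ε ≤ ε ^ 2 * (B * q * (1 - q)⁻¹) := by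
          rw [hu_def]
          exact mul_le_mul_of_nonneg_left (hg_val ▸ htsum) (sq_nonneg ε)
      _ = B * q * (ε ^ 2 * (1 - q)⁻¹) := by ring
      _ ≤ B * 1 * (4 / c) := by
          apply mul_le_mul (by nlinarith) hεq (by positivity) (by positivity)
      _ = φ K := by rw [hφ_def, hB_def]; ring
  have hG_le : ∀ K : ℝ, 1 ≤ K →
      Filter.limsup (u K) (nhdsWithin (0:ℝ) (Set.Ioi 0)) ≤ φ K := by
    intro K hK
    exact limsup_le_of_le
      (isCoboundedUnder_le_of_le _ (fun ε => hunn K ε)) (key K hK)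
  have hG_ge : ∀ K : ℝ, 1 ≤ K →
      0 ≤ Filter.limsup (u K) (nhdsWithin (0:ℝ) (Set.Ioi 0)) := by
    intro K hK
    exact le_limsup_of_frequently_le
      ((Eventually.of_forall (fun ε => hunn K ε)).frequently)
      (isBoundedUnder_of_eventually_le (key K hK))
  have hφ0 : Tendsto φ atTop (nhds 0) := by
    rw [hφ_def]
    have ha : Tendsto (fun K : ℝ => c * K) atTop atTop :=
      Tendsto.const_mul_atTop hc tendsto_id
    have h1 : Tendsto (fun K : ℝ => -(c * K) / 2) atTop atBot :=
      Tendsto.atBot_div_const two_pos (tendsto_neg_atTop_atBot.comp ha)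
    have hexp : Tendsto (fun K : ℝ => Real.exp (-(c * K) / 2)) atTop (nhds 0) :=
      Real.tendsto_exp_atBot.comp h1
    have := hexp.const_mul (4 * C / c)
    simpa using this
  have hsq : Tendsto (fun K : ℝ =>
      Filter.limsup (u K) (nhdsWithin (0:ℝ) (Set.Ioi 0))) atTop (nhds 0) := by
    apply tendsto_of_tendsto_of_tendsto_of_le_of_le' tendsto_const_nhds hφ0
    · exact eventually_atTop.2 ⟨1, hG_ge⟩
    · exact eventually_atTop.2 ⟨1, hG_le⟩
  exact hsq.limsup_eq
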